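/- arXiv:2407.10158 — 2 statements merged into one kernel-verified Lean document; each statement's English description precedes it below -/
import Mathlib

section
/- Let m, n be positive integers and h a norm on ℝ^m with generated norm H on ℝ^{m×n}. Then H(θ ⊗ e) = h(θ) for every θ ∈ ℝ^m and every unit vector e ∈ ℝ^n, and moreover H is the largest convex function with this property: if G : ℝ^{m×n} → ℝ is convex and satisfies G(θ ⊗ e) = h(θ) for all θ ∈ ℝ^m and all unit vectors e ∈ ℝ^n, then G(M) ≤ H(M) for all M ∈ ℝ^{m×n}. -/
open MeasureTheory

noncomputable section

/-- `ℝ^n` with the Euclidean norm. -/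
abbrev Euc (n : ℕ) := EuclideanSpace ℝ (Fin n)

/-- `h` is a norm on `ℝ^m`. -/
def IsNorm {m : ℕ} (h : (Fin m → ℝ) → ℝ) : Prop :=
  (∀ x y, h (x + y) ≤ h x + h y) ∧ (∀ (c : ℝ) (x), h (c • x) = |c| * h x) ∧
    ∀ x, h x = 0 → x = 0

/-- The dual norm `h_*` of `h`: `h_*(g) = sup { g·θ : h θ ≤ 1 }`. -/
def dualNorm {m : ℕ} (h : (Fin m → ℝ) → ℝ) (g : Fin m → ℝ) : ℝ :=
  sSup {r | ∃ θ : Fin m → ℝ, h θ ≤ 1 ∧ r = ∑ i, g i * θ i}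

/-- Matrix-vector product `M u`. -/
def matVec {m n : ℕ} (M : Fin m → Fin n → ℝ) (u : Euc n) : Fin m → ℝ :=
  fun i => ∑ j, M i j * u j

/-- Frobenius inner product `M : N`. -/
def frob {m n : ℕ} (M N : Fin m → Fin n → ℝ) : ℝ := ∑ i, ∑ j, M i j * N i j

/-- `M ∈ ∂H(0)`, i.e. `h_*(M u) ≤ 1` for all `|u| ≤ 1`. -/
def inSubdiffH {m n : ℕ} (h : (Fin m → ℝ) → ℝ) (M : Fin m → Fin n → ℝ) : Prop :=
  ∀ u : Euc n, ‖u‖ ≤ 1 → dualNorm h (matVec M u) ≤ 1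

/-- The norm `H` on `ℝ^{m×n}` generated by `h`:
`H(N) = sup { M:N : M ∈ ∂H(0) }`. -/
def genNorm {m n : ℕ} (h : (Fin m → ℝ) → ℝ) (N : Fin m → Fin n → ℝ) : ℝ :=
  sSup {r | ∃ M : Fin m → Fin n → ℝ, inSubdiffH h M ∧ r = frob M N}

/-- The rank-one matrix `θ ⊗ e`. -/
def outer {m n : ℕ} (θ : Fin m → ℝ) (e : Euc n) : Fin m → Fin n → ℝ :=
  fun i j => θ i * e j

variable {m : ℕ} {h : (Fin m → ℝ) → ℝ}

lemma h_zero (hh : IsNorm h) : h 0 = 0 := by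
  have := hh.2.1 0 0; simpa using this

lemma h_neg (hh : IsNorm h) (x : Fin m → ℝ) : h (-x) = h x := by
  have := hh.2.1 (-1) x; simpa using this

lemma h_nonneg (hh : IsNorm h) (x : Fin m → ℝ) : 0 ≤ h x := by
  have h1 := hh.1 x (-x)
  rw [add_neg_cancel, h_zero hh, h_neg hh] at h1
  linarith

lemma h_bound (hh : IsNorm h) : ∃ C : ℝ, 0 ≤ C ∧ ∀ x, h x ≤ C * ‖x‖ := by
  refine ⟨∑ i, h (Pi.single i 1), Finset.sum_nonneg fun i _ => h_nonneg hh _, fun x => ?_⟩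
  have hx : x = ∑ i, (x i) • (Pi.single i (1:ℝ) : Fin m → ℝ) := by
    funext j
    simp [Finset.sum_apply, Pi.single_apply, mul_ite]
  calc h x = h (∑ i, (x i) • (Pi.single i (1:ℝ) : Fin m → ℝ)) := by rw [← hx]
    _ ≤ ∑ i, h ((x i) • (Pi.single i (1:ℝ) : Fin m → ℝ)) :=
        Finset.le_sum_of_subadditive h (h_zero hh).le hh.1 _ _
    _ = ∑ i, |x i| * h (Pi.single i 1) := by
        simp only [hh.2.1]
    _ ≤ ∑ i, ‖x‖ * h (Pi.single i 1) := by
        refine Finset.sum_le_sum fun i _ => ?_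
        exact mul_le_mul_of_nonneg_right (by simpa using norm_le_pi_norm x i) (h_nonneg hh _)
    _ = (∑ i, h (Pi.single i 1)) * ‖x‖ := by rw [← Finset.mul_sum, mul_comm]

lemma h_continuous (hh : IsNorm h) : Continuous h := by
  obtain ⟨C, hC0, hC⟩ := h_bound hh
  have key : ∀ x y : Fin m → ℝ, h x - h y ≤ C * ‖x - y‖ := by
    intro x y
    have := hh.1 y (x - y)
    simp only [add_sub_cancel] at this
    have := hC (x - y)
    linarith
  rw [Metric.continuous_iff]
  intro x ε hε
  rcases eq_or_lt_of_le hC0 with hC0' | hC0'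
  · exact ⟨1, one_pos, fun y _ => by
      have h1 := key y x; have h2 := key x y
      rw [← hC0'] at h1 h2
      simp only [zero_mul] at h1 h2
      have : h y = h x := le_antisymm (by linarith) (by linarith)
      simpa [this, Real.dist_eq] using hε⟩
  · refine ⟨ε / C, by positivity, fun y hy => ?_⟩
    have h1 := key y x
    have h2 := key x y
    have hxy : ‖y - x‖ < ε / C := by rwa [dist_eq_norm] at hy
    have hyx : ‖x - y‖ < ε / C := by rwa [norm_sub_rev]
    have hcc : C * (ε / C) = ε := by field_simp
    rw [Real.dist_eq, abs_lt]
    constructor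
    · nlinarith [mul_lt_mul_of_pos_left hyx hC0']
    · nlinarith [mul_lt_mul_of_pos_left hxy hC0']

lemma h_coercive (hh : IsNorm h) (hm : 0 < m) : ∃ c : ℝ, 0 < c ∧ ∀ x, c * ‖x‖ ≤ h x := by
  haveI : Nonempty (Fin m) := ⟨⟨0, hm⟩⟩
  have hsc : IsCompact (Metric.sphere (0 : Fin m → ℝ) 1) := isCompact_sphere _ _
  have hsne : (Metric.sphere (0 : Fin m → ℝ) 1).Nonempty := by
    refine ⟨fun _ => 1, ?_⟩
    simp [pi_norm_const']
  obtain ⟨x₀, hx₀s, hx₀min⟩ := hsc.exists_isMinOn hsne (h_continuous hh).continuousOn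
  have hx₀norm : ‖x₀‖ = 1 := by simpa using hx₀s
  have hx₀ne : x₀ ≠ 0 := fun hx => by simp [hx] at hx₀norm
  have hc : 0 < h x₀ := by
    rcases lt_or_eq_of_le (h_nonneg hh x₀) with hlt | heq
    · exact hlt
    · exact absurd (hh.2.2 x₀ heq.symm) hx₀ne
  refine ⟨h x₀, hc, fun x => ?_⟩
  rcases eq_or_ne x 0 with rfl | hx
  · simp [h_zero hh]
  · have hxn : (0:ℝ) < ‖x‖ := norm_pos_iff.2 hx
    have hmem : ‖x‖⁻¹ • x ∈ Metric.sphere (0 : Fin m → ℝ) 1 := by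
      simp [norm_smul, abs_of_pos (inv_pos.2 hxn), inv_mul_cancel₀ hxn.ne']
    have := hx₀min hmem
    have h1 : h x₀ ≤ h (‖x‖⁻¹ • x) := this
    have h2 : h (‖x‖⁻¹ • x) = ‖x‖⁻¹ * h x := by
      rw [hh.2.1]; rw [abs_of_pos (inv_pos.2 hxn)]
    rw [h2] at h1
    calc h x₀ * ‖x‖ ≤ (‖x‖⁻¹ * h x) * ‖x‖ := by nlinarith
      _ = h x := by field_simp

section
variable {n : ℕ}

lemma dualSet_nonempty (hh : IsNorm h) (g : Fin m → ℝ) :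
    (0:ℝ) ∈ {r | ∃ θ : Fin m → ℝ, h θ ≤ 1 ∧ r = ∑ i, g i * θ i} := by
  exact ⟨0, by simp [h_zero hh]⟩

lemma dualSet_bddAbove (hh : IsNorm h) (hm : 0 < m) (g : Fin m → ℝ) :
    BddAbove {r | ∃ θ : Fin m → ℝ, h θ ≤ 1 ∧ r = ∑ i, g i * θ i} := by
  obtain ⟨c, hc, hcoer⟩ := h_coercive hh hm
  refine ⟨(∑ i, |g i|) * c⁻¹, fun r hr => ?_⟩
  obtain ⟨θ, hθ, rfl⟩ := hr
  have hθn : ‖θ‖ ≤ c⁻¹ := by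
    have h1 : c * ‖θ‖ ≤ 1 := le_trans (hcoer θ) hθ
    nlinarith [mul_inv_cancel₀ hc.ne', norm_nonneg θ]
  calc ∑ i, g i * θ i ≤ ∑ i, |g i| * c⁻¹ := by
        refine Finset.sum_le_sum fun i _ => ?_
        calc g i * θ i ≤ |g i * θ i| := le_abs_self _
          _ = |g i| * |θ i| := abs_mul _ _
          _ ≤ |g i| * c⁻¹ := by
              refine mul_le_mul_of_nonneg_left ?_ (abs_nonneg _)
              exact le_trans (by simpa using norm_le_pi_norm θ i) hθn
    _ = (∑ i, |g i|) * c⁻¹ := by rw [← Finset.sum_mul]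

lemma le_dualNorm (hh : IsNorm h) (hm : 0 < m) (g θ : Fin m → ℝ) (hθ : h θ ≤ 1) :
    ∑ i, g i * θ i ≤ dualNorm h g :=
  le_csSup (dualSet_bddAbove hh hm g) ⟨θ, hθ, rfl⟩

lemma frob_outer {m n : ℕ} (A : Fin m → Fin n → ℝ) (θ : Fin m → ℝ) (u : Euc n) :
    frob A (outer θ u) = ∑ i, matVec A u i * θ i := by
  unfold frob outer matVec
  refine Finset.sum_congr rfl fun i _ => ?_
  rw [Finset.sum_mul]
  refine Finset.sum_congr rfl fun j _ => by ring

lemma frob_outer_le (hh : IsNorm h) (hm : 0 < m) {A : Fin m → Fin n → ℝ}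
    (hA : inSubdiffH h A) (θ : Fin m → ℝ) (u : Euc n) (hu : ‖u‖ ≤ 1) :
    frob A (outer θ u) ≤ h θ := by
  rcases eq_or_lt_of_le (h_nonneg hh θ) with h0 | h0
  · have hθ0 : θ = 0 := hh.2.2 θ h0.symm
    subst hθ0
    simp [frob_outer, ← h0]
  · have hθ' : h ((h θ)⁻¹ • θ) ≤ 1 := by
      rw [hh.2.1, abs_of_pos (inv_pos.2 h0), inv_mul_cancel₀ h0.ne']
    have h1 : ∑ i, matVec A u i * ((h θ)⁻¹ • θ) i ≤ 1 :=
      le_trans (le_dualNorm hh hm _ _ hθ') (hA u hu)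
    have h2 : ∑ i, matVec A u i * ((h θ)⁻¹ • θ) i = (h θ)⁻¹ * ∑ i, matVec A u i * θ i := by
      rw [Finset.mul_sum]
      exact Finset.sum_congr rfl fun i _ => by simp [Pi.smul_apply]; ring
    rw [frob_outer]
    rw [h2] at h1
    calc ∑ i, matVec A u i * θ i = h θ * ((h θ)⁻¹ * ∑ i, matVec A u i * θ i) := by
          field_simp
      _ ≤ h θ * 1 := mul_le_mul_of_nonneg_left h1 h0.le
      _ = h θ := mul_one _

lemma frob_eq_sum_cols {m n : ℕ} (A M : Fin m → Fin n → ℝ) :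
    frob A M = ∑ j, frob A (outer (fun i => M i j) (EuclideanSpace.single j 1)) := by
  unfold frob outer
  have key : ∀ j : Fin n, (∑ i, ∑ j', A i j' * (M i j * (EuclideanSpace.single j (1:ℝ)) j'))
      = ∑ i, A i j * M i j := by
    intro j
    refine Finset.sum_congr rfl fun i _ => ?_
    simp [EuclideanSpace.single_apply, mul_ite]
  rw [Finset.sum_congr rfl (fun j _ => key j), Finset.sum_comm]

lemma zero_inSubdiffH (hh : IsNorm h) : inSubdiffH h (0 : Fin m → Fin n → ℝ) := by
  intro u _
  refine csSup_le ⟨0, dualSet_nonempty hh _⟩ ?_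
  rintro r ⟨θ, hθ, rfl⟩
  simp [matVec]

lemma Hset_bddAbove (hh : IsNorm h) (hm : 0 < m) (M : Fin m → Fin n → ℝ) :
    BddAbove {r | ∃ A : Fin m → Fin n → ℝ, inSubdiffH h A ∧ r = frob A M} := by
  refine ⟨∑ j, h (fun i => M i j), fun r hr => ?_⟩
  obtain ⟨A, hA, rfl⟩ := hr
  rw [frob_eq_sum_cols]
  refine Finset.sum_le_sum fun j _ => ?_
  exact frob_outer_le hh hm hA _ _ (by simp [EuclideanSpace.norm_single])

lemma Hset_nonempty (hh : IsNorm h) (M : Fin m → Fin n → ℝ) :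
    (0:ℝ) ∈ {r | ∃ A : Fin m → Fin n → ℝ, inSubdiffH h A ∧ r = frob A M} :=
  ⟨0, zero_inSubdiffH hh, by simp [frob]⟩

end


lemma linear_eq_sum (ℓ : (Fin m → ℝ) →ₗ[ℝ] ℝ) (θ : Fin m → ℝ) :
    ℓ θ = ∑ i, ℓ (Pi.single i 1) * θ i := by
  have hθ : θ = ∑ i, (θ i) • (Pi.single i (1:ℝ) : Fin m → ℝ) := by
    funext j
    simp [Finset.sum_apply, Pi.single_apply, mul_ite]
  conv_lhs => rw [hθ]
  rw [map_sum]
  refine Finset.sum_congr rfl fun i _ => ?_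
  rw [LinearMap.map_smul, smul_eq_mul, mul_comm]

lemma exists_dual_elem (hh : IsNorm h) (θ₀ : Fin m → ℝ) :
    ∃ g : Fin m → ℝ, (∑ i, g i * θ₀ i) = h θ₀ ∧ ∀ θ, (∑ i, g i * θ i) ≤ h θ := by
  rcases eq_or_ne θ₀ 0 with rfl | hne
  · exact ⟨0, by simp [h_zero hh], fun θ => by simpa using h_nonneg hh θ⟩
  · have H : ∀ c : ℝ, c • θ₀ = 0 → c • (h θ₀) = 0 := by
      intro c hc
      have : c = 0 := by
        by_contra hc0
        exact hne (by simpa [smul_smul, inv_mul_cancel₀ hc0] using congrArg (c⁻¹ • ·) hc)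
      simp [this]
    obtain ⟨ℓ, hℓf, hℓle⟩ := exists_extension_of_le_sublinear
      (LinearPMap.mkSpanSingleton' θ₀ (h θ₀) H) h
      (fun c hc x => by rw [hh.2.1, abs_of_pos hc])
      hh.1
      (by
        rintro ⟨x, hx⟩
        have hx' : x ∈ Submodule.span ℝ {θ₀} := by
          rwa [LinearPMap.domain_mkSpanSingleton] at hx
        obtain ⟨c, rfl⟩ := Submodule.mem_span_singleton.1 hx'
        rw [LinearPMap.mkSpanSingleton'_apply, smul_eq_mul, RingHom.id_apply]
        rcases le_or_gt 0 c with hc | hc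
        · calc c * h θ₀ = h (c • θ₀) := by rw [hh.2.1, abs_of_nonneg hc]
            _ ≤ h (c • θ₀) := le_refl _
        · have h1 : c * h θ₀ ≤ 0 := mul_nonpos_of_nonpos_of_nonneg hc.le (h_nonneg hh θ₀)
          exact le_trans h1 (h_nonneg hh _))
    refine ⟨fun i => ℓ (Pi.single i 1), ?_, fun θ => ?_⟩
    · have hmem : θ₀ ∈ (LinearPMap.mkSpanSingleton' (σ := RingHom.id ℝ) θ₀ (h θ₀) H).domain := by
        rw [LinearPMap.domain_mkSpanSingleton]
        exact Submodule.mem_span_singleton_self θ₀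
      have h1 := hℓf ⟨θ₀, hmem⟩
      rw [LinearPMap.mkSpanSingleton'_apply_self] at h1
      rw [← linear_eq_sum, h1]
    · rw [← linear_eq_sum]
      exact hℓle θ

lemma genNorm_outer {n : ℕ} (hh : IsNorm h) (hm : 0 < m) (θ : Fin m → ℝ) (e : Euc n)
    (he : ‖e‖ = 1) : genNorm h (outer θ e) = h θ := by
  obtain ⟨g, hg1, hg2⟩ := exists_dual_elem hh θ
  have he2 : ∑ j, e j * e j = 1 := by
    have h3 : (inner ℝ e e : ℝ) = ‖e‖ ^ 2 := real_inner_self_eq_norm_sq e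
    rw [PiLp.inner_apply] at h3
    simp only [RCLike.inner_apply, conj_trivial] at h3
    rw [h3, he]; norm_num
  refine le_antisymm ?_ ?_
  · refine csSup_le ⟨0, Hset_nonempty hh _⟩ ?_
    rintro r ⟨A, hA, rfl⟩
    exact frob_outer_le hh hm hA θ e he.le
  · set A : Fin m → Fin n → ℝ := fun i j => g i * e j with hAdef
    have hA : inSubdiffH h A := by
      intro u hu
      set c : ℝ := ∑ j, e j * u j with hcdef
      have hc : |c| ≤ 1 := by
        have h1 : c = inner ℝ e u := by
          rw [hcdef, PiLp.inner_apply]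
          simp [RCLike.inner_apply, conj_trivial, mul_comm]
        rw [h1]
        calc |(inner ℝ e u : ℝ)| ≤ ‖e‖ * ‖u‖ := abs_real_inner_le_norm e u
          _ ≤ 1 := by rw [he]; simpa using hu
      refine csSup_le ⟨0, dualSet_nonempty hh _⟩ ?_
      rintro r ⟨θ', hθ', rfl⟩
      have hmv : ∀ i, matVec A u i = g i * c := by
        intro i
        simp only [matVec, hAdef]
        rw [hcdef, Finset.mul_sum]
        exact Finset.sum_congr rfl fun j _ => by ring
      have hr : ∑ i, matVec A u i * θ' i = c * ∑ i, g i * θ' i := by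
        rw [Finset.mul_sum]
        refine Finset.sum_congr rfl fun i _ => ?_
        rw [hmv i]; ring
      rw [hr]
      have habs : |∑ i, g i * θ' i| ≤ 1 := by
        rw [abs_le]
        constructor
        · have h4 := hg2 (-θ')
          have hsum : ∑ i, g i * (-θ') i = -∑ i, g i * θ' i := by
            rw [← Finset.sum_neg_distrib]
            exact Finset.sum_congr rfl fun i _ => by simp
          rw [hsum, h_neg hh] at h4
          linarith [le_trans h4 hθ']
        · exact le_trans (hg2 θ') hθ'
      calc c * ∑ i, g i * θ' i ≤ |c * ∑ i, g i * θ' i| := le_abs_self _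
        _ = |c| * |∑ i, g i * θ' i| := abs_mul _ _
        _ ≤ 1 * 1 := mul_le_mul hc habs (abs_nonneg _) zero_le_one
        _ = 1 := one_mul 1
    have hmv : ∀ i, matVec A e i = g i := by
      intro i
      simp only [matVec, hAdef]
      calc ∑ j, g i * e j * e j = g i * ∑ j, e j * e j := by
            rw [Finset.mul_sum]
            exact Finset.sum_congr rfl fun j _ => by ring
        _ = g i := by rw [he2, mul_one]
    have hfrob : frob A (outer θ e) = h θ := by
      rw [frob_outer, ← hg1]
      exact Finset.sum_congr rfl fun i _ => by rw [hmv i]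
    calc h θ = frob A (outer θ e) := hfrob.symm
      _ ≤ genNorm h (outer θ e) := le_csSup (Hset_bddAbove hh hm _) ⟨A, hA, rfl⟩

/-- The set of costs of rank-one decompositions of `M`. -/
def decompSet {m n : ℕ} (h : (Fin m → ℝ) → ℝ) (M : Fin m → Fin n → ℝ) : Set ℝ :=
  {r | ∃ (k : ℕ) (θ : Fin k → Fin m → ℝ) (e : Fin k → Euc n),
      (∀ i, ‖e i‖ = 1) ∧ M = ∑ i, outer (θ i) (e i) ∧ r = ∑ i, h (θ i)}

/-- The decomposition norm. -/
def Fnorm {m n : ℕ} (h : (Fin m → ℝ) → ℝ) (M : Fin m → Fin n → ℝ) : ℝ :=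
  sInf (decompSet h M)

section Fnorm
variable {n : ℕ}

lemma sum_outer_cols (M : Fin m → Fin n → ℝ) :
    M = ∑ j, outer (fun i => M i j) (EuclideanSpace.single j (1:ℝ)) := by
  funext a b
  simp only [Finset.sum_apply, outer, EuclideanSpace.single_apply]
  simp [mul_ite, eq_comm]

lemma decompSet_nonempty (M : Fin m → Fin n → ℝ) : (decompSet h M).Nonempty :=
  ⟨∑ j, h (fun i => M i j), n, fun j => (fun i => M i j),
    fun j => EuclideanSpace.single j (1:ℝ),
    fun j => by simp [EuclideanSpace.norm_single], sum_outer_cols M, rfl⟩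

lemma decompSet_nonneg (hh : IsNorm h) {M : Fin m → Fin n → ℝ} {r : ℝ}
    (hr : r ∈ decompSet h M) : 0 ≤ r := by
  obtain ⟨k, θ, e, _, _, rfl⟩ := hr
  exact Finset.sum_nonneg fun i _ => h_nonneg hh _

lemma decompSet_bddBelow (hh : IsNorm h) (M : Fin m → Fin n → ℝ) :
    BddBelow (decompSet h M) :=
  ⟨0, fun r hr => decompSet_nonneg hh hr⟩

lemma Fnorm_nonneg (hh : IsNorm h) (M : Fin m → Fin n → ℝ) : 0 ≤ Fnorm h M :=
  le_csInf (decompSet_nonempty M) fun r hr => decompSet_nonneg hh hr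

lemma Fnorm_le (hh : IsNorm h) {M : Fin m → Fin n → ℝ} {r : ℝ}
    (hr : r ∈ decompSet h M) : Fnorm h M ≤ r :=
  csInf_le (decompSet_bddBelow hh M) hr

lemma Fnorm_zero_le (hh : IsNorm h) : Fnorm h (0 : Fin m → Fin n → ℝ) ≤ 0 :=
  Fnorm_le hh ⟨0, Fin.elim0, Fin.elim0, fun i => i.elim0, by simp, by simp⟩

lemma outer_smul (c : ℝ) (θ : Fin m → ℝ) (e : Euc n) :
    outer (c • θ) e = c • outer θ e := by
  funext i j
  simp [outer, mul_assoc]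

lemma decompSet_smul (hh : IsNorm h) {M : Fin m → Fin n → ℝ} {r : ℝ} {c : ℝ} (hc : 0 < c)
    (hr : r ∈ decompSet h M) : c * r ∈ decompSet h (c • M) := by
  obtain ⟨k, θ, e, he, hM, rfl⟩ := hr
  refine ⟨k, fun i => c • θ i, e, he, ?_, ?_⟩
  · rw [hM, Finset.smul_sum]
    exact Finset.sum_congr rfl fun i _ => (outer_smul c (θ i) (e i)).symm
  · rw [Finset.mul_sum]
    exact Finset.sum_congr rfl fun i _ => by rw [hh.2.1, abs_of_pos hc]

lemma Fnorm_smul_le (hh : IsNorm h) {c : ℝ} (hc : 0 < c) (M : Fin m → Fin n → ℝ) :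
    Fnorm h (c • M) ≤ c * Fnorm h M := by
  have h1 : Fnorm h (c • M) / c ≤ Fnorm h M := by
    refine le_csInf (decompSet_nonempty M) fun r hr => ?_
    rw [div_le_iff₀ hc, mul_comm]
    exact Fnorm_le hh (decompSet_smul hh hc hr)
  rw [div_le_iff₀ hc, mul_comm] at h1
  exact h1

lemma Fnorm_smul (hh : IsNorm h) {c : ℝ} (hc : 0 < c) (M : Fin m → Fin n → ℝ) :
    Fnorm h (c • M) = c * Fnorm h M := by
  refine le_antisymm (Fnorm_smul_le hh hc M) ?_
  have h1 := Fnorm_smul_le hh (inv_pos.2 hc) (c • M)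
  rw [smul_smul, inv_mul_cancel₀ hc.ne', one_smul] at h1
  calc c * Fnorm h M ≤ c * (c⁻¹ * Fnorm h (c • M)) := by
        exact mul_le_mul_of_nonneg_left h1 hc.le
    _ = Fnorm h (c • M) := by field_simp

lemma Fnorm_add_le (hh : IsNorm h) (M N : Fin m → Fin n → ℝ) :
    Fnorm h (M + N) ≤ Fnorm h M + Fnorm h N := by
  have key : ∀ r ∈ decompSet h M, ∀ s ∈ decompSet h N, r + s ∈ decompSet h (M + N) := by
    rintro r ⟨k₁, θ₁, e₁, he₁, hM, rfl⟩ s ⟨k₂, θ₂, e₂, he₂, hN, rfl⟩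
    refine ⟨k₁ + k₂, Fin.addCases θ₁ θ₂, Fin.addCases e₁ e₂, ?_, ?_, ?_⟩
    · intro i
      refine Fin.addCases (fun i₁ => ?_) (fun i₂ => ?_) i
      · simpa using he₁ i₁
      · simpa using he₂ i₂
    · rw [hM, hN, Fin.sum_univ_add]
      congr 1
      · exact Finset.sum_congr rfl fun i _ => by simp
      · exact Finset.sum_congr rfl fun i _ => by simp
    · rw [Fin.sum_univ_add]
      congr 1
      · exact Finset.sum_congr rfl fun i _ => by simp
      · exact Finset.sum_congr rfl fun i _ => by simp
  have h1 : Fnorm h (M + N) - Fnorm h N ≤ Fnorm h M := by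
    refine le_csInf (decompSet_nonempty M) fun r hr => ?_
    have h2 : Fnorm h (M + N) - r ≤ Fnorm h N := by
      refine le_csInf (decompSet_nonempty N) fun s hs => ?_
      have := Fnorm_le hh (key r hr s hs)
      linarith
    linarith
  linarith

end Fnorm

section Main
variable {n : ℕ}

lemma outer_zero (e : Euc n) : outer (0 : Fin m → ℝ) e = 0 := by
  funext i j; simp [outer]

lemma G_zero {G : (Fin m → Fin n → ℝ) → ℝ} (hh : IsNorm h) (hn : 0 < n)
    (hGo : ∀ (θ : Fin m → ℝ) (e : Euc n), ‖e‖ = 1 → G (outer θ e) = h θ) : G 0 = 0 := by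
  have he : ‖(EuclideanSpace.single (⟨0, hn⟩ : Fin n) (1:ℝ))‖ = 1 := by
    simp [EuclideanSpace.norm_single]
  have := hGo 0 _ he
  rwa [outer_zero, h_zero hh] at this

lemma G_le_Fnorm (hh : IsNorm h) (hn : 0 < n) {G : (Fin m → Fin n → ℝ) → ℝ}
    (hG : ConvexOn ℝ Set.univ G)
    (hGo : ∀ (θ : Fin m → ℝ) (e : Euc n), ‖e‖ = 1 → G (outer θ e) = h θ)
    (M : Fin m → Fin n → ℝ) : G M ≤ Fnorm h M := by
  refine le_csInf (decompSet_nonempty M) ?_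
  rintro r ⟨k, θ, e, he, hM, rfl⟩
  set S : ℝ := ∑ i, h (θ i) with hS
  have hS0 : 0 ≤ S := Finset.sum_nonneg fun i _ => h_nonneg hh _
  rcases eq_or_lt_of_le hS0 with hS0' | hS0'
  · -- all terms vanish, M = 0
    have hall : ∀ i ∈ Finset.univ, h (θ i) = 0 := by
      rw [← Finset.sum_eq_zero_iff_of_nonneg (fun i _ => h_nonneg hh _), ← hS, ← hS0']
    have hM0 : M = 0 := by
      rw [hM]
      refine Finset.sum_eq_zero fun i _ => ?_
      have : θ i = 0 := hh.2.2 _ (hall i (Finset.mem_univ i))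
      rw [this, outer_zero]
    rw [hM0, G_zero hh hn hGo]; exact hS0
  · -- Jensen
    set w : Fin k → ℝ := fun i => h (θ i) / S with hw
    set P : Fin k → (Fin m → Fin n → ℝ) := fun i => outer ((S / h (θ i)) • θ i) (e i) with hP
    have hw0 : ∀ i ∈ Finset.univ, 0 ≤ w i := fun i _ =>
      div_nonneg (h_nonneg hh _) hS0
    have hw1 : ∑ i : Fin k, w i = 1 := by
      rw [hw, ← Finset.sum_div, ← hS, div_self hS0'.ne']
    have hwP : ∀ i, w i • P i = outer (θ i) (e i) := by
      intro i
      rcases eq_or_lt_of_le (h_nonneg hh (θ i)) with h0 | h0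
      · have hθ0 : θ i = 0 := hh.2.2 _ h0.symm
        rw [hw, hP]
        simp only [hθ0, ← h0]
        rw [outer_zero, smul_zero]
        simp [outer_zero]
      · rw [hw, hP]
        simp only
        rw [outer_smul, smul_smul]
        have : h (θ i) / S * (S / h (θ i)) = 1 := by
          field_simp
        rw [this, one_smul]
    have hsum : ∑ i, w i • P i = M := by
      rw [hM]
      exact Finset.sum_congr rfl fun i _ => hwP i
    have hGP : ∀ i, w i * G (P i) = h (θ i) := by
      intro i
      have hGPi : G (P i) = h ((S / h (θ i)) • θ i) := hGo _ _ (he i)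
      rw [hGPi, hh.2.1]
      rcases eq_or_lt_of_le (h_nonneg hh (θ i)) with h0 | h0
      · rw [← h0]
        simp [hw, ← h0]
      · rw [abs_of_nonneg (div_nonneg hS0 (h_nonneg hh _))]
        rw [hw]
        field_simp
    have hJ := hG.map_sum_le hw0 hw1 (fun i _ => Set.mem_univ (P i))
    rw [hsum] at hJ
    calc G M ≤ ∑ i, w i • G (P i) := hJ
      _ = ∑ i, h (θ i) := Finset.sum_congr rfl fun i _ => by
          rw [smul_eq_mul, hGP i]

lemma Fnorm_outer_le_one (hh : IsNorm h) {θ' : Fin m → ℝ} {u : Euc n}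
    (hθ' : h θ' ≤ 1) (hu : ‖u‖ ≤ 1) : Fnorm h (outer θ' u) ≤ 1 := by
  rcases eq_or_ne u 0 with rfl | hu0
  · have : outer θ' (0 : Euc n) = 0 := by
      funext i j; simp [outer]
    rw [this]
    exact le_trans (Fnorm_zero_le hh) zero_le_one
  · have hun : (0:ℝ) < ‖u‖ := norm_pos_iff.2 hu0
    have hmem : h (‖u‖ • θ') ∈ decompSet h (outer θ' u) := by
      refine ⟨1, fun _ => ‖u‖ • θ', fun _ => ‖u‖⁻¹ • u, ?_, ?_, ?_⟩
      · intro i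
        rw [norm_smul]
        simp [abs_of_pos (inv_pos.2 hun), inv_mul_cancel₀ hun.ne']
      · rw [Fin.sum_univ_one]
        funext i j
        simp only [outer, Pi.smul_apply, smul_eq_mul, PiLp.smul_apply]
        field_simp
      · rw [Fin.sum_univ_one]
    refine le_trans (Fnorm_le hh hmem) ?_
    rw [hh.2.1, abs_of_pos hun]
    calc ‖u‖ * h θ' ≤ 1 * 1 := by
          exact mul_le_mul hu hθ' (h_nonneg hh _) zero_le_one
      _ = 1 := one_mul 1

lemma matrix_rep (x : Fin m → Fin n → ℝ) :
    x = ∑ i, ∑ j, (x i j) • (Pi.single i (Pi.single j (1:ℝ)) : Fin m → Fin n → ℝ) := by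
  funext a b
  simp only [Finset.sum_apply, Pi.smul_apply, smul_eq_mul, Pi.single_apply,
    apply_ite (fun f : Fin n → ℝ => f b), Pi.zero_apply, mul_ite, mul_zero, mul_one, ite_mul,
    zero_mul]
  simp [Finset.sum_ite_eq']

lemma linear_eq_frob (g : (Fin m → Fin n → ℝ) →ₗ[ℝ] ℝ) (x : Fin m → Fin n → ℝ) :
    g x = frob (fun i j => g (Pi.single i (Pi.single j (1:ℝ)))) x := by
  conv_lhs => rw [matrix_rep x]
  rw [map_sum]
  refine Finset.sum_congr rfl fun i _ => ?_
  rw [map_sum]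
  refine Finset.sum_congr rfl fun j _ => ?_
  rw [LinearMap.map_smul, smul_eq_mul, mul_comm]

lemma Fnorm_le_genNorm (hh : IsNorm h) (hm : 0 < m) (M : Fin m → Fin n → ℝ) :
    Fnorm h M ≤ genNorm h M := by
  have hH0 : 0 ≤ genNorm h M :=
    le_csSup (Hset_bddAbove hh hm M) (Hset_nonempty hh M)
  rcases eq_or_ne M 0 with rfl | hM0
  · exact le_trans (Fnorm_zero_le hh) hH0
  · have H : ∀ c : ℝ, c • M = 0 → c • (Fnorm h M) = 0 := by
      intro c hc
      have : c = 0 := by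
        by_contra hc0
        exact hM0 (by simpa [smul_smul, inv_mul_cancel₀ hc0] using congrArg (c⁻¹ • ·) hc)
      simp [this]
    obtain ⟨g, hgf, hgle⟩ := exists_extension_of_le_sublinear
      (LinearPMap.mkSpanSingleton' M (Fnorm h M) H) (Fnorm h)
      (fun c hc x => Fnorm_smul hh hc x)
      (Fnorm_add_le hh)
      (by
        rintro ⟨x, hx⟩
        have hx' : x ∈ Submodule.span ℝ {M} := by
          rwa [LinearPMap.domain_mkSpanSingleton] at hx
        obtain ⟨c, rfl⟩ := Submodule.mem_span_singleton.1 hx'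
        rw [LinearPMap.mkSpanSingleton'_apply, smul_eq_mul, RingHom.id_apply]
        rcases lt_trichotomy c 0 with hc | hc | hc
        · have h1 : c * Fnorm h M ≤ 0 :=
            mul_nonpos_of_nonpos_of_nonneg hc.le (Fnorm_nonneg hh M)
          exact le_trans h1 (Fnorm_nonneg hh _)
        · subst hc
          simp only [zero_mul, zero_smul]
          exact Fnorm_nonneg hh 0
        · rw [← Fnorm_smul hh hc M])
    set A : Fin m → Fin n → ℝ := fun i j => g (Pi.single i (Pi.single j (1:ℝ))) with hA
    have hgfrob : ∀ x, g x = frob A x := fun x => linear_eq_frob g x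
    have hAK : inSubdiffH h A := by
      intro u hu
      refine csSup_le ⟨0, dualSet_nonempty hh _⟩ ?_
      rintro r ⟨θ', hθ', rfl⟩
      have h1 : ∑ i, matVec A u i * θ' i = frob A (outer θ' u) := (frob_outer A θ' u).symm
      rw [h1, ← hgfrob]
      exact le_trans (hgle _) (Fnorm_outer_le_one hh hθ' hu)
    have hgM : g M = Fnorm h M := by
      have hmem : M ∈ (LinearPMap.mkSpanSingleton' (σ := RingHom.id ℝ) M (Fnorm h M) H).domain := by
        rw [LinearPMap.domain_mkSpanSingleton]
        exact Submodule.mem_span_singleton_self M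
      have h1 := hgf ⟨M, hmem⟩
      rwa [LinearPMap.mkSpanSingleton'_apply_self] at h1
    calc Fnorm h M = g M := hgM.symm
      _ = frob A M := hgfrob M
      _ ≤ genNorm h M := le_csSup (Hset_bddAbove hh hm M) ⟨A, hAK, rfl⟩

end Main

/-- `H(θ ⊗ e) = h(θ)` for unit `e`, and `H` is the largest convex
function on `ℝ^{m×n}` with this property. -/
theorem statement0 {m n : ℕ} (hm : 0 < m) (hn : 0 < n)
    (h : (Fin m → ℝ) → ℝ) (hh : IsNorm h) :
    (∀ (θ : Fin m → ℝ) (e : Euc n), ‖e‖ = 1 → genNorm h (outer θ e) = h θ) ∧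
    ∀ G : (Fin m → Fin n → ℝ) → ℝ, ConvexOn ℝ Set.univ G →
      (∀ (θ : Fin m → ℝ) (e : Euc n), ‖e‖ = 1 → G (outer θ e) = h θ) →
      ∀ M : Fin m → Fin n → ℝ, G M ≤ genNorm h M := by
  constructor
  · intro θ e he
    exact genNorm_outer hh hm θ e he
  · intro G hG hGo M
    calc G M ≤ Fnorm h M := G_le_Fnorm hh hn hG hGo M
      _ ≤ genNorm h M := Fnorm_le_genNorm hh hm M
end
end

section
/- Let m = n = 2 and h(θ) = max{|θ_1|, |θ_2|, |θ_1 − θ_2|} for θ ∈ ℝ², with generated norm H on ℝ^{2×2}. Then H(I) = (1 + √3)/√2, where I ∈ ℝ^{2×2} is the identity matrix. -/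
open MeasureTheory

noncomputable section

/-- The norm `h(θ) = max{|θ₁|, |θ₂|, |θ₁ - θ₂|}` on `ℝ²`. -/
def h2 : (Fin 2 → ℝ) → ℝ := fun θ => max (max |θ 0| |θ 1|) |θ 0 - θ 1|


-- dual set bounded above
lemma dual_bddAbove (g : Fin 2 → ℝ) :
    BddAbove {r | ∃ θ : Fin 2 → ℝ, h2 θ ≤ 1 ∧ r = ∑ i, g i * θ i} := by
  refine ⟨|g 0| + |g 1|, ?_⟩
  rintro r ⟨θ, hθ, rfl⟩
  have h0 : |θ 0| ≤ 1 := le_trans (le_max_left _ _) (le_trans (le_max_left _ _) hθ)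
  have h1 : |θ 1| ≤ 1 := le_trans (le_max_right _ _) (le_trans (le_max_left _ _) hθ)
  rw [Fin.sum_univ_two]
  have e0 : g 0 * θ 0 ≤ |g 0| := by
    calc g 0 * θ 0 ≤ |g 0 * θ 0| := le_abs_self _
    _ = |g 0| * |θ 0| := abs_mul _ _
    _ ≤ |g 0| * 1 := mul_le_mul_of_nonneg_left h0 (abs_nonneg _)
    _ = |g 0| := mul_one _
  have e1 : g 1 * θ 1 ≤ |g 1| := by
    calc g 1 * θ 1 ≤ |g 1 * θ 1| := le_abs_self _
    _ = |g 1| * |θ 1| := abs_mul _ _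
    _ ≤ |g 1| * 1 := mul_le_mul_of_nonneg_left h1 (abs_nonneg _)
    _ = |g 1| := mul_one _
  linarith

lemma elem_le_dual (g θ : Fin 2 → ℝ) (hθ : h2 θ ≤ 1) :
    g 0 * θ 0 + g 1 * θ 1 ≤ dualNorm h2 g :=
  le_csSup (dual_bddAbove g) ⟨θ, hθ, by rw [Fin.sum_univ_two]⟩

lemma euc_sq {u : Euc 2} (hu : ‖u‖ ≤ 1) : u 0 ^ 2 + u 1 ^ 2 ≤ 1 := by
  have h := EuclideanSpace.norm_eq u
  have h2 : ‖u‖ ^ 2 = u 0 ^ 2 + u 1 ^ 2 := by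
    rw [h, Real.sq_sqrt (by positivity)]
    simp [Fin.sum_univ_two, Real.norm_eq_abs, sq_abs]
  nlinarith [norm_nonneg u]

lemma row_bound (r : Fin 2 → ℝ)
    (hr : ∀ u : Euc 2, ‖u‖ ≤ 1 → r 0 * u 0 + r 1 * u 1 ≤ 1) :
    r 0 ^ 2 + r 1 ^ 2 ≤ 1 := by
  by_contra hcon
  push_neg at hcon
  set n := Real.sqrt (r 0 ^ 2 + r 1 ^ 2) with hndef
  have hn2 : n ^ 2 = r 0 ^ 2 + r 1 ^ 2 := Real.sq_sqrt (by positivity)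
  have hn0 : 0 ≤ n := Real.sqrt_nonneg _
  have hn1 : 1 < n := by nlinarith
  set u : Euc 2 := WithLp.toLp 2 ![r 0 / n, r 1 / n] with hudef
  have hu0 : u 0 = r 0 / n := rfl
  have hu1 : u 1 = r 1 / n := rfl
  have hnorm : ‖u‖ ≤ 1 := by
    rw [EuclideanSpace.norm_eq]
    have : ∑ i, ‖u i‖ ^ 2 = 1 := by
      simp only [Fin.sum_univ_two, hu0, hu1, Real.norm_eq_abs, sq_abs]
      field_simp
      linarith [hn2]
    rw [this, Real.sqrt_one]
  have := hr u hnorm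
  rw [hu0, hu1] at this
  have hne : n ≠ 0 := by linarith
  have : r 0 ^ 2 / n + r 1 ^ 2 / n ≤ 1 := by
    have e : r 0 * (r 0 / n) + r 1 * (r 1 / n) = r 0 ^2 / n + r 1 ^2 / n := by ring
    linarith [e ▸ this]
  have : n ≤ 1 := by
    rw [← add_div, ← hn2] at this
    calc n = n ^ 2 / n := by field_simp
    _ ≤ 1 := this
  linarith

lemma cauchy2 (x y s2 t : ℝ) (hs2 : s2^2 = 2) (hs2n : 1 ≤ s2) (ht : 0 ≤ t)
    (hxy : x^2 + y^2 = t^2) : x + y ≤ s2 * t := by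
  nlinarith [sq_nonneg (x - y), sq_nonneg (s2*t - x - y), mul_nonneg (le_trans zero_le_one hs2n) ht]

lemma uw_ineq (U W s3 : ℝ) (hU0 : 0 ≤ U) (hW0 : 0 ≤ W) (hU1 : U ≤ 1)
    (hW4 : W^2 ≤ 4 - U^2) (hs3 : s3^2 = 3) (hs3n : 1 ≤ s3) : U + W ≤ 1 + s3 := by
  nlinarith [mul_nonneg (sub_nonneg.2 hU1) (sub_nonneg.2 (le_trans hU1 hs3n)), sq_nonneg (W - (1 + s3 - U))]

lemma key_ineq (a b e d : ℝ) (h1 : a^2+b^2 ≤ 1) (h2 : e^2+d^2 ≤ 1)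
    (h3 : (a+e)^2+(b+d)^2 ≤ 1) : a + d ≤ (1 + Real.sqrt 3) / Real.sqrt 2 := by
  have hs3 : (Real.sqrt 3)^2 = 3 := Real.sq_sqrt (by norm_num)
  have hs2 : (Real.sqrt 2)^2 = 2 := Real.sq_sqrt (by norm_num)
  have hs3n : 1 ≤ Real.sqrt 3 := by nlinarith [Real.sqrt_nonneg 3]
  have hs2n : 1 ≤ Real.sqrt 2 := by nlinarith [Real.sqrt_nonneg 2]
  set s3 := Real.sqrt 3
  set s2 := Real.sqrt 2
  set U := Real.sqrt ((a+e)^2 + (b+d)^2) with hUdef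
  set W := Real.sqrt ((a-e)^2 + (b-d)^2) with hWdef
  have hU0 : 0 ≤ U := Real.sqrt_nonneg _
  have hW0 : 0 ≤ W := Real.sqrt_nonneg _
  have hU2 : U^2 = (a+e)^2 + (b+d)^2 := Real.sq_sqrt (by positivity)
  have hW2 : W^2 = (a-e)^2 + (b-d)^2 := Real.sq_sqrt (by positivity)
  have hU1 : U ≤ 1 := by nlinarith
  have hW4 : W^2 ≤ 4 - U^2 := by nlinarith
  have hA : (a+e) + (b+d) ≤ s2 * U := cauchy2 _ _ _ _ hs2 hs2n hU0 hU2.symm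
  have hB : (a-e) + (d-b) ≤ s2 * W := by
    have := cauchy2 (a-e) (d-b) s2 W hs2 hs2n hW0 (by rw [hW2]; ring)
    linarith
  have hUW : U + W ≤ 1 + s3 := uw_ineq U W s3 hU0 hW0 hU1 hW4 hs3 hs3n
  have hfin : (a + d) * s2 ≤ 1 + s3 := by nlinarith
  rw [le_div_iff₀ (by positivity)]
  linarith

-- upper bound
lemma trace_le (M : Fin 2 → Fin 2 → ℝ) (hM : inSubdiffH h2 M) :
    M 0 0 + M 1 1 ≤ (1 + Real.sqrt 3) / Real.sqrt 2 := by
  have hθa : h2 ![(1:ℝ), 0] ≤ 1 := by simp [h2]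
  have hθb : h2 ![(0:ℝ), 1] ≤ 1 := by simp [h2]
  have hθc : h2 ![(1:ℝ), 1] ≤ 1 := by simp [h2]
  have hrow0 : M 0 0 ^ 2 + M 0 1 ^ 2 ≤ 1 := by
    apply row_bound
    intro u hu
    have := le_trans (elem_le_dual (matVec M u) ![(1:ℝ),0] hθa) (hM u hu)
    simpa [matVec, Fin.sum_univ_two] using this
  have hrow1 : M 1 0 ^ 2 + M 1 1 ^ 2 ≤ 1 := by
    apply row_bound
    intro u hu
    have := le_trans (elem_le_dual (matVec M u) ![(0:ℝ),1] hθb) (hM u hu)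
    simpa [matVec, Fin.sum_univ_two] using this
  have hrow2 : (M 0 0 + M 1 0) ^ 2 + (M 0 1 + M 1 1) ^ 2 ≤ 1 := by
    have h := row_bound (fun j => M 0 j + M 1 j) ?_
    · simpa using h
    · intro u hu
      have := le_trans (elem_le_dual (matVec M u) ![(1:ℝ),1] hθc) (hM u hu)
      simp only [matVec, Fin.sum_univ_two] at this ⊢
      simp at this
      linarith
  exact key_ineq (M 0 0) (M 0 1) (M 1 0) (M 1 1) hrow0 hrow1 hrow2


def pval : ℝ := (Real.sqrt 2 * Real.sqrt 3 + Real.sqrt 2) / 4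
def qval : ℝ := (Real.sqrt 2 * Real.sqrt 3 - Real.sqrt 2) / 4
def Mstar : Fin 2 → Fin 2 → ℝ := ![![pval, -qval], ![-qval, pval]]

lemma pq_sq : pval ^ 2 + qval ^ 2 = 1 := by
  have hs3 : (Real.sqrt 3)^2 = 3 := Real.sq_sqrt (by norm_num)
  have hs2 : (Real.sqrt 2)^2 = 2 := Real.sq_sqrt (by norm_num)
  unfold pval qval
  field_simp
  nlinarith [hs3, hs2]

lemma pq_prod : pval * qval = 1 / 4 := by
  have hs3 : (Real.sqrt 3)^2 = 3 := Real.sq_sqrt (by norm_num)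
  have hs2 : (Real.sqrt 2)^2 = 2 := Real.sq_sqrt (by norm_num)
  unfold pval qval
  field_simp
  nlinarith [hs3, hs2]

lemma dot_le_one (v0 v1 u0 u1 : ℝ) (hv : v0^2 + v1^2 ≤ 1) (hu : u0^2 + u1^2 ≤ 1) :
    v0 * u0 + v1 * u1 ≤ 1 := by
  have h1 : (v0*u0 + v1*u1)^2 ≤ 1 := by
    nlinarith [sq_nonneg (v0*u1 - v1*u0),
      mul_nonneg (add_nonneg (sq_nonneg v0) (sq_nonneg v1)) (sub_nonneg.2 hu)]
  nlinarith [sq_nonneg (v0*u0 + v1*u1 - 1)]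

lemma theta_quad {θ : Fin 2 → ℝ} (hθ : h2 θ ≤ 1) :
    θ 0 ^ 2 + θ 1 ^ 2 - θ 0 * θ 1 ≤ 1 := by
  have h0 : |θ 0| ≤ 1 := le_trans (le_max_left _ _) (le_trans (le_max_left _ _) hθ)
  have h1 : |θ 1| ≤ 1 := le_trans (le_max_right _ _) (le_trans (le_max_left _ _) hθ)
  have h01 : |θ 0 - θ 1| ≤ 1 := le_trans (le_max_right _ _) hθ
  rw [abs_le] at h0 h1 h01
  rcases le_or_gt (θ 0 * θ 1) 0 with h | h
  · nlinarith [h01.1, h01.2]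
  · rcases le_or_gt 0 (θ 0) with hx | hx
    · have hx' : 0 < θ 0 := by nlinarith
      have hy : 0 < θ 1 := by nlinarith
      nlinarith [mul_nonneg (sub_nonneg.2 h0.2) (sub_nonneg.2 h1.2),
        mul_nonneg hx'.le (sub_nonneg.2 h0.2), mul_nonneg hy.le (sub_nonneg.2 h1.2)]
    · have hy : θ 1 < 0 := by nlinarith
      nlinarith [mul_nonneg (by linarith [h0.1] : (0:ℝ) ≤ 1 + θ 0) (by linarith [h1.1] : (0:ℝ) ≤ 1 + θ 1),
        mul_nonneg (by linarith : (0:ℝ) ≤ -θ 0) (by linarith [h0.1] : (0:ℝ) ≤ 1 + θ 0),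
        mul_nonneg (by linarith : (0:ℝ) ≤ -θ 1) (by linarith [h1.1] : (0:ℝ) ≤ 1 + θ 1)]

lemma Mstar_sub : inSubdiffH h2 Mstar := by
  intro u hu
  apply Real.sSup_le
  · rintro r ⟨θ, hθ, rfl⟩
    rw [Fin.sum_univ_two]
    have hg0 : matVec Mstar u 0 = pval * u 0 - qval * u 1 := by
      simp [matVec, Mstar, Fin.sum_univ_two]; ring
    have hg1 : matVec Mstar u 1 = -qval * u 0 + pval * u 1 := by
      simp [matVec, Mstar, Fin.sum_univ_two]
    rw [hg0, hg1]
    have hv : (pval * θ 0 - qval * θ 1)^2 + (pval * θ 1 - qval * θ 0)^2 ≤ 1 := by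
      have e : (pval * θ 0 - qval * θ 1)^2 + (pval * θ 1 - qval * θ 0)^2
          = (pval^2+qval^2) * (θ 0^2 + θ 1^2) - 4*(pval*qval)*(θ 0 * θ 1) := by ring
      rw [e, pq_sq, pq_prod]
      have := theta_quad hθ
      linarith
    have := dot_le_one (pval * θ 0 - qval * θ 1) (pval * θ 1 - qval * θ 0) (u 0) (u 1) hv (euc_sq hu)
    linarith [this]
  · positivity

lemma ub_set (r : ℝ)
    (hr : r ∈ {r | ∃ M : Fin 2 → Fin 2 → ℝ, inSubdiffH h2 M ∧
      r = frob M (fun i j => if i = j then (1 : ℝ) else 0)}) :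
    r ≤ (1 + Real.sqrt 3) / Real.sqrt 2 := by
  obtain ⟨M, hM, rfl⟩ := hr
  have := trace_le M hM
  have e : frob M (fun i j => if i = j then (1 : ℝ) else 0) = M 0 0 + M 1 1 := by
    simp [frob, Fin.sum_univ_two]
  rw [e]; exact this

/-- for this `h`, the generated norm satisfies `H(I) = (1 + √3)/√2`. -/
theorem statement3 :
    genNorm h2 (fun i j => if i = j then (1 : ℝ) else 0) =
      (1 + Real.sqrt 3) / Real.sqrt 2 := by
  have hs3 : (Real.sqrt 3)^2 = 3 := Real.sq_sqrt (by norm_num)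
  have hs2 : (Real.sqrt 2)^2 = 2 := Real.sq_sqrt (by norm_num)
  have hs2pos : 0 < Real.sqrt 2 := by positivity
  have hmem : (1 + Real.sqrt 3) / Real.sqrt 2 ∈
      {r | ∃ M : Fin 2 → Fin 2 → ℝ, inSubdiffH h2 M ∧
        r = frob M (fun i j => if i = j then (1 : ℝ) else 0)} := by
    refine ⟨Mstar, Mstar_sub, ?_⟩
    have e : frob Mstar (fun i j => if i = j then (1 : ℝ) else 0) = 2 * pval := by
      simp [frob, Mstar, Fin.sum_univ_two]; ring
    rw [e]
    unfold pval
    rw [div_eq_iff (ne_of_gt hs2pos)]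
    linear_combination (-(Real.sqrt 3 + 1)/2) * hs2
  apply le_antisymm
  · exact Real.sSup_le ub_set (by positivity)
  · exact le_csSup ⟨_, ub_set⟩ hmem
end
end
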